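/- In the n-dimensional Morris orientation, let v be a vertex with v_k = 0 for some coordinate k. Then any directed path starting from v reaches a vertex u with u_k = 1 after at most n(n+1)/2 steps. -/

import Mathlib

/-- Flip coordinate `i` of a cube vertex. -/
def cflip {n : ℕ} (v : Fin n → Bool) (i : Fin n) : Fin n → Bool :=
  fun j => if j = i then !v j else v j

/-- `Φ v i = true` means the edge between `v` and `v ⊕ i` is incoming at `v` (sign `+`);
`Φ v i = false` means it is outgoing at `v` (sign `-`). Consistency says the two
endpoints of an edge agree about its direction. -/
def Consistent {n : ℕ} (Φ : (Fin n → Bool) → Fin n → Bool) : Prop :=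
  ∀ v i, Φ (cflip v i) i ≠ Φ v i

/-- `w` lies in the subcube spanned from `u` by the coordinate set `C`. -/
def InSubcube {n : ℕ} (u : Fin n → Bool) (C : Finset (Fin n)) (w : Fin n → Bool) : Prop :=
  ∀ j ∉ C, w j = u j

/-- Every (nonempty) subcube has a unique sink. -/
def HasUniqueSinks {n : ℕ} (Φ : (Fin n → Bool) → Fin n → Bool) : Prop :=
  ∀ (u : Fin n → Bool) (C : Finset (Fin n)),
    ∃! w, InSubcube u C w ∧ ∀ i ∈ C, Φ w i = true

/-- A unique-sink orientation of the `n`-cube. -/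
def IsUSO {n : ℕ} (Φ : (Fin n → Bool) → Fin n → Bool) : Prop :=
  Consistent Φ ∧ HasUniqueSinks Φ

/-- Directed edge relation of the orientation: `v → u`. -/
def Step {n : ℕ} (Φ : (Fin n → Bool) → Fin n → Bool) (v u : Fin n → Bool) : Prop :=
  ∃ i, Φ v i = false ∧ u = cflip v i

/-- Length of the run of `1`s at positions `j+1, j+2, …` (cyclically), i.e. the state
of the Morris transducer just before reading `v j` is `T` iff this run length is odd. -/
def morrisRun {n : ℕ} [NeZero n] (v : Fin n → Bool) (j : Fin n) : ℕ :=
  let K := (Finset.range n).filter (fun k : ℕ => v (j + 1 + (Fin.ofNat n k)) = false)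
  if h : K.Nonempty then K.min' h else 0

/-- The Morris orientation of the `n`-cube (`n` odd), given by the two-state transducer:
the all-ones vertex is the global sink; otherwise the edge at `v` in coordinate `j` is
outgoing (`false`) iff `v j` agrees with the parity of the run of ones above `j`. -/
def morris {n : ℕ} [NeZero n] (v : Fin n → Bool) : Fin n → Bool :=
  fun j =>
    if ∀ i, v i = true then true
    else !(v j == decide (Odd (morrisRun v j)))

/-! ### Auxiliary lemmas -/

open Fin.NatCast Fin.CommRing

section Aux
variable {n : ℕ} [NeZero n]

lemma shiftPos (k : Fin n) (t c : ℕ) :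
    k + (t : Fin n) + 1 + (c : Fin n) = k + ((t + 1 + c : ℕ) : Fin n) := by
  push_cast; ring

lemma castPos_inj {a b : ℕ} (ha : a < n) (hb : b < n) (h : (a : Fin n) = b) : a = b := by
  have := congrArg Fin.val h
  rwa [Fin.val_natCast, Fin.val_natCast, Nat.mod_eq_of_lt ha, Nat.mod_eq_of_lt hb] at this

lemma pos_ne {k : Fin n} {a b : ℕ} (ha : a < n) (hb : b < n) (hab : a ≠ b) :
    k + (a : Fin n) ≠ k + (b : Fin n) := by
  intro h
  exact hab (castPos_inj ha hb (add_left_cancel h))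

/-- Uniqueness characterization of `morrisRun`. -/
lemma morrisRun_eq_of {v : Fin n → Bool} {j : Fin n} {r : ℕ}
    (hr : r < n) (h0 : v (j + 1 + (r : Fin n)) = false)
    (h1 : ∀ c < r, v (j + 1 + (c : Fin n)) = true) :
    morrisRun v j = r := by
  have hrK : r ∈ (Finset.range n).filter (fun c : ℕ => v (j + 1 + (c : Fin n)) = false) :=
    Finset.mem_filter.mpr ⟨Finset.mem_range.mpr hr, h0⟩
  have hne : ((Finset.range n).filter (fun c : ℕ => v (j + 1 + (c : Fin n)) = false)).Nonempty :=
    ⟨r, hrK⟩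
  simp only [morrisRun, Fin.ofNat_eq_cast]
  rw [dif_pos hne]
  apply le_antisymm (Finset.min'_le _ _ hrK)
  apply Finset.le_min'
  intro y hy
  by_contra hlt
  have hyr : y < r := by omega
  have := h1 y hyr
  rw [(Finset.mem_filter.mp hy).2] at this
  exact Bool.false_ne_true this

/-- Specification of `morrisRun` when some coordinate is `false`. -/
lemma morrisRun_spec {v : Fin n → Bool} {k : Fin n} (hk : v k = false) (j : Fin n) :
    morrisRun v j < n ∧ v (j + 1 + ((morrisRun v j : ℕ) : Fin n)) = false ∧
      ∀ c < morrisRun v j, v (j + 1 + (c : Fin n)) = true := by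
  set K := (Finset.range n).filter (fun c : ℕ => v (j + 1 + (c : Fin n)) = false) with hK
  have hwmem : ((k - (j+1)).val) ∈ K := by
    refine Finset.mem_filter.mpr ⟨Finset.mem_range.mpr (Fin.is_lt _), ?_⟩
    rw [Fin.cast_val_eq_self, show j + 1 + (k - (j+1)) = k by ring]
    exact hk
  have hne : K.Nonempty := ⟨_, hwmem⟩
  have hrun : morrisRun v j = K.min' hne := by
    simp only [morrisRun, Fin.ofNat_eq_cast]
    rw [dif_pos hne]
  have hmem0 := K.min'_mem hne
  have hmem : K.min' hne < n ∧ v (j + 1 + ((K.min' hne : ℕ) : Fin n)) = false := by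
    have := Finset.mem_filter.mp hmem0
    exact ⟨Finset.mem_range.mp this.1, this.2⟩
  refine ⟨by rw [hrun]; exact hmem.1, by rw [hrun]; exact hmem.2, ?_⟩
  intro c hc
  cases hcv : v (j + 1 + (c : Fin n)) with
  | true => rfl
  | false =>
    exfalso
    have hcK : c ∈ K := Finset.mem_filter.mpr
      ⟨Finset.mem_range.mpr (lt_trans (by rw [hrun] at hc; exact hc) hmem.1), hcv⟩
    have := Finset.min'_le K c hcK
    rw [hrun] at hc
    omega

lemma morrisRun_le {v : Fin n → Bool} {k : Fin n} (hk : v k = false) {j : Fin n} {r0 : ℕ}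
    (h0 : v (j + 1 + (r0 : Fin n)) = false) : morrisRun v j ≤ r0 := by
  by_contra h
  have := (morrisRun_spec hk j).2.2 r0 (by omega)
  rw [h0] at this
  exact Bool.false_ne_true this

lemma morrisRun_zero {v : Fin n → Bool} (j : Fin n) (h : v (j + 1) = false) :
    morrisRun v j = 0 := by
  apply morrisRun_eq_of (Nat.pos_of_ne_zero (NeZero.ne n))
  · simpa using h
  · intro c hc; exact absurd hc (Nat.not_lt_zero c)

/-- run length from offset `t` (relative to `k`) is at most `n - 1 - t`. -/
lemma morrisRun_le_off {v : Fin n → Bool} {k : Fin n} (hk : v k = false) {t : ℕ}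
    (ht : t ≤ n - 1) : morrisRun v (k + (t : Fin n)) ≤ n - 1 - t := by
  have hn := Nat.pos_of_ne_zero (NeZero.ne n)
  apply morrisRun_le hk
  rw [shiftPos, show t + 1 + (n - 1 - t) = n by omega]
  simpa using hk

/-- If `v` and `v'` agree on offsets in `(t, b)` and both vanish at offset `b`,
then the runs at offset `t` coincide. -/
lemma run_eq_run {v v' : Fin n → Bool} {k : Fin n} (hk : v k = false)
    {t b : ℕ} (hb : b ≤ n) (ht : t < b)
    (hagree : ∀ u, t < u → u < b → v' (k + (u : Fin n)) = v (k + (u : Fin n)))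
    (hzb : v (k + (b : Fin n)) = false) (hzb' : v' (k + (b : Fin n)) = false) :
    morrisRun v' (k + (t : Fin n)) = morrisRun v (k + (t : Fin n)) := by
  obtain ⟨hlt, h0, h1⟩ := morrisRun_spec hk (k + (t : Fin n))
  rw [shiftPos] at h0
  set r := morrisRun v (k + (t : Fin n)) with hr
  have hstop : t + 1 + r ≤ b := by
    by_contra h
    have hc : b - (t+1) < r := by omega
    have h2 := h1 _ hc
    rw [shiftPos, show t + 1 + (b - (t+1)) = b by omega, hzb] at h2
    exact Bool.false_ne_true h2
  apply morrisRun_eq_of hlt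
  · rw [shiftPos]
    rcases eq_or_lt_of_le hstop with heq | hlt2
    · rw [heq]; exact hzb'
    · rw [hagree _ (by omega) hlt2]; exact h0
  · intro c hc
    rw [shiftPos, hagree _ (by omega) (by omega)]
    have := h1 c hc
    rwa [shiftPos] at this

/-! ### Potential function -/

def mterm (k : Fin n) (v : Fin n → Bool) (t : ℕ) : ℕ :=
  if v (k + (t : Fin n)) = true then t
  else if Odd (morrisRun v (k + (t : Fin n))) then t + 1 else 0

def mpsi (k : Fin n) (v : Fin n → Bool) : ℕ := ∑ t ∈ Finset.Icc 1 (n - 1), mterm k v t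

end Aux

section StepLemma
variable {n : ℕ} [NeZero n]

lemma mpsi_step {v : Fin n → Bool} {k i : Fin n} (hk : v k = false)
    (hik : i ≠ k) (hout : morris v i = false) :
    mpsi k v + 1 ≤ mpsi k (cflip v i) := by
  have hn := Nat.pos_of_ne_zero (NeZero.ne n)
  set v' := cflip v i with hv'
  have hv'i : v' i = !v i := by simp [hv', cflip]
  have hv'ne : ∀ x, x ≠ i → v' x = v x := by
    intro x hx; simp [hv', cflip, hx]
  have hv'k : v' k = false := by rw [hv'ne k (Ne.symm hik)]; exact hk
  set t0 := (i - k).val with ht0def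
  have hkt0 : k + ((t0 : ℕ) : Fin n) = i := by
    rw [ht0def, Fin.cast_val_eq_self]; ring
  have ht0pos : 1 ≤ t0 := by
    rcases Nat.eq_zero_or_pos t0 with h | h
    · exfalso
      have h2 : i - k = 0 := Fin.ext (by rw [← ht0def, h]; simp)
      exact hik (by rwa [sub_eq_zero] at h2)
    · exact h
  have ht0lt : t0 < n := Fin.is_lt _
  have hnall : ¬ ∀ x, v x = true := by
    intro h; simp [h] at hk
  have hvi : v i = decide (Odd (morrisRun v i)) := by
    simp only [morris, if_neg hnall, Bool.not_eq_false', beq_iff_eq] at hout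
    exact hout
  have hsame : ∀ t : ℕ, t < n → t ≠ t0 → v' (k + (t : Fin n)) = v (k + (t : Fin n)) := by
    intro t ht hne
    apply hv'ne
    rw [← hkt0]
    exact pos_ne ht ht0lt hne
  have habove : ∀ t, t0 ≤ t → t ≤ n - 1 →
      morrisRun v' (k + (t : Fin n)) = morrisRun v (k + (t : Fin n)) := by
    intro t h1 h2
    apply run_eq_run hk (le_refl n) (by omega)
    · intro u hu1 hu2
      exact hsame u hu2 (by omega)
    · rw [show ((n : ℕ) : Fin n) = 0 by simp, add_zero]; exact hk
    · rw [show ((n : ℕ) : Fin n) = 0 by simp, add_zero]; exact hv'k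
  have ht0S : t0 ∈ Finset.Icc 1 (n-1) := Finset.mem_Icc.mpr ⟨ht0pos, by omega⟩
  unfold mpsi
  rw [← Finset.add_sum_erase _ (mterm k v) ht0S, ← Finset.add_sum_erase _ (mterm k v') ht0S]
  set Z := (Finset.Icc 1 (t0-1)).filter (fun u : ℕ => v (k + (u : Fin n)) = false) with hZdef
  cases hvi0 : v i with
  | true =>
    -- Case A
    have hoi : Odd (morrisRun v i) := by
      rw [hvi0] at hvi
      exact of_decide_eq_true hvi.symm
    have hrun0 : morrisRun v' i = morrisRun v i := by
      rw [← hkt0]; exact habove t0 le_rfl (by omega)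
    have hterm0 : mterm k v' t0 = mterm k v t0 + 1 := by
      unfold mterm
      rw [hkt0, hrun0, hvi0, hv'i, hvi0]
      simp [hoi]
    have hrest : ∀ t ∈ (Finset.Icc 1 (n-1)).erase t0, mterm k v' t = mterm k v t := by
      intro t htm
      obtain ⟨htne, htIcc⟩ := Finset.mem_erase.mp htm
      obtain ⟨ht1, ht2⟩ := Finset.mem_Icc.mp htIcc
      have htn : t < n := by omega
      have hsame_t : v' (k + (t : Fin n)) = v (k + (t : Fin n)) := hsame t htn htne
      rcases lt_or_gt_of_ne htne with hlt | hgt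
      · -- t < t0
        cases hvt : v (k + (t : Fin n)) with
        | true => unfold mterm; rw [hsame_t, hvt]; simp
        | false =>
          have htZ : t ∈ Z := Finset.mem_filter.mpr ⟨Finset.mem_Icc.mpr ⟨ht1, by omega⟩, hvt⟩
          have hZne : Z.Nonempty := ⟨t, htZ⟩
          have hjZ := Z.max'_mem hZne
          set j := Z.max' hZne with hjdef
          obtain ⟨hjIcc, hjz⟩ := Finset.mem_filter.mp hjZ
          obtain ⟨hj1, hj2⟩ := Finset.mem_Icc.mp hjIcc
          have hblock : ∀ u, j < u → u < t0 → v (k + (u : Fin n)) = true := by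
            intro u hu1 hu2
            cases hvu : v (k + (u : Fin n)) with
            | true => rfl
            | false =>
              exfalso
              have huZ : u ∈ Z :=
                Finset.mem_filter.mpr ⟨Finset.mem_Icc.mpr ⟨by omega, by omega⟩, hvu⟩
              have := Finset.le_max' Z u huZ
              omega
          have htj : t ≤ j := Finset.le_max' Z t htZ
          rcases eq_or_lt_of_le htj with heq | hltj
          · -- t = j : parity computation
            have hblock' : ∀ u, t < u → u < t0 → v (k + (u : Fin n)) = true := by
              intro u h1 h2; exact hblock u (by omega) h2
            have hR0le : morrisRun v (k + ((t0 : ℕ) : Fin n)) ≤ n - 1 - t0 :=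
              morrisRun_le_off hk (by omega)
            obtain ⟨hsl, hs0, hs1⟩ := morrisRun_spec hk (k + ((t0 : ℕ) : Fin n))
            set R0 := morrisRun v (k + ((t0 : ℕ) : Fin n)) with hR0def
            rw [shiftPos] at hs0
            have hrun' : morrisRun v' (k + (t : Fin n)) = t0 - (t + 1) := by
              apply morrisRun_eq_of (by omega)
              · rw [shiftPos, show t + 1 + (t0 - (t+1)) = t0 by omega, hkt0, hv'i, hvi0]
                rfl
              · intro c hc
                rw [shiftPos, hsame (t+1+c) (by omega) (by omega)]
                exact hblock' (t+1+c) (by omega) (by omega)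
            have hrun : morrisRun v (k + (t : Fin n)) = (t0 - t) + R0 := by
              apply morrisRun_eq_of (by omega)
              · rw [shiftPos, show t + 1 + ((t0 - t) + R0) = t0 + 1 + R0 by omega]
                exact hs0
              · intro c hc
                rw [shiftPos]
                rcases lt_trichotomy c (t0 - (t+1)) with h | h | h
                · exact hblock' (t+1+c) (by omega) (by omega)
                · rw [show t + 1 + c = t0 by omega, hkt0]
                  exact hvi0
                · have hc' : c - (t0 - t) < R0 := by omega
                  have h2 := hs1 _ hc'
                  rw [shiftPos] at h2
                  rw [show t + 1 + c = t0 + 1 + (c - (t0 - t)) by omega]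
                  exact h2
            have hR0odd : Odd R0 := by rw [hR0def, hkt0]; exact hoi
            have hparity : Odd (t0 - (t + 1)) ↔ Odd ((t0 - t) + R0) := by
              rw [Nat.odd_iff, Nat.odd_iff] at *
              omega
            have hvt' : v' (k + (t : Fin n)) = false := by rw [hsame_t]; exact hvt
            unfold mterm
            rw [hvt, hvt', hrun, hrun']
            have hif : (if Odd (t0 - (t + 1)) then t + 1 else 0)
                = (if Odd ((t0 - t) + R0) then t + 1 else 0) := by
              by_cases hodd2 : Odd (t0 - (t + 1))
              · rw [if_pos hodd2, if_pos (hparity.mp hodd2)]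
              · rw [if_neg hodd2, if_neg (fun h => hodd2 (hparity.mpr h))]
            simpa using hif
          · -- t < j
            have hruneq : morrisRun v' (k + (t : Fin n)) = morrisRun v (k + (t : Fin n)) := by
              apply run_eq_run hk (by omega : j ≤ n) hltj
              · intro u hu1 hu2; exact hsame u (by omega) (by omega)
              · exact hjz
              · rw [hsame j (by omega) (by omega)]; exact hjz
            unfold mterm
            rw [hsame_t, hruneq]
      · -- t > t0
        have hruneq := habove t (by omega) (by omega)
        unfold mterm
        rw [hsame_t, hruneq]
    have hsum : ∑ x ∈ (Finset.Icc 1 (n-1)).erase t0, mterm k v' x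
        = ∑ x ∈ (Finset.Icc 1 (n-1)).erase t0, mterm k v x := Finset.sum_congr rfl hrest
    omega
  | false =>
    -- Case B
    have hnoi : ¬ Odd (morrisRun v i) := by
      rw [hvi0] at hvi
      exact of_decide_eq_false hvi.symm
    have hterm0' : mterm k v' t0 = t0 := by
      unfold mterm
      rw [hkt0, hv'i, hvi0]
      simp
    have hterm0 : mterm k v t0 = 0 := by
      unfold mterm
      rw [hkt0, hvi0]
      simp [hnoi]
    by_cases hZne : Z.Nonempty
    · have hjZ := Z.max'_mem hZne
      set j := Z.max' hZne with hjdef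
      obtain ⟨hjIcc, hjz⟩ := Finset.mem_filter.mp hjZ
      obtain ⟨hj1, hj2⟩ := Finset.mem_Icc.mp hjIcc
      have hblock : ∀ u, j < u → u < t0 → v (k + (u : Fin n)) = true := by
        intro u hu1 hu2
        cases hvu : v (k + (u : Fin n)) with
        | true => rfl
        | false =>
          exfalso
          have huZ : u ∈ Z :=
            Finset.mem_filter.mpr ⟨Finset.mem_Icc.mpr ⟨by omega, by omega⟩, hvu⟩
          have := Finset.le_max' Z u huZ
          omega
      have hjmem : j ∈ (Finset.Icc 1 (n-1)).erase t0 :=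
        Finset.mem_erase.mpr ⟨by omega, Finset.mem_Icc.mpr ⟨hj1, by omega⟩⟩
      rw [← Finset.add_sum_erase _ (mterm k v) hjmem, ← Finset.add_sum_erase _ (mterm k v') hjmem]
      have hrest : ∀ t ∈ ((Finset.Icc 1 (n-1)).erase t0).erase j,
          mterm k v' t = mterm k v t := by
        intro t htm
        obtain ⟨htnej, htm2⟩ := Finset.mem_erase.mp htm
        obtain ⟨htne, htIcc⟩ := Finset.mem_erase.mp htm2
        obtain ⟨ht1, ht2⟩ := Finset.mem_Icc.mp htIcc
        have htn : t < n := by omega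
        have hsame_t : v' (k + (t : Fin n)) = v (k + (t : Fin n)) := hsame t htn htne
        rcases lt_or_gt_of_ne htne with hlt | hgt
        · cases hvt : v (k + (t : Fin n)) with
          | true => unfold mterm; rw [hsame_t, hvt]; simp
          | false =>
            have htZ : t ∈ Z := Finset.mem_filter.mpr ⟨Finset.mem_Icc.mpr ⟨ht1, by omega⟩, hvt⟩
            have htj : t ≤ j := Finset.le_max' Z t htZ
            have hltj : t < j := by omega
            have hruneq : morrisRun v' (k + (t : Fin n)) = morrisRun v (k + (t : Fin n)) := by
              apply run_eq_run hk (by omega : j ≤ n) hltj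
              · intro u hu1 hu2; exact hsame u (by omega) (by omega)
              · exact hjz
              · rw [hsame j (by omega) (by omega)]; exact hjz
            unfold mterm
            rw [hsame_t, hruneq]
        · have hruneq := habove t (by omega) (by omega)
          unfold mterm
          rw [hsame_t, hruneq]
      have hsum : ∑ x ∈ ((Finset.Icc 1 (n-1)).erase t0).erase j, mterm k v' x
          = ∑ x ∈ ((Finset.Icc 1 (n-1)).erase t0).erase j, mterm k v x :=
        Finset.sum_congr rfl hrest
      by_cases hoj : Odd (morrisRun v (k + (j : Fin n)))
      · have hj3 : j + 1 < t0 := by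
          by_contra h
          have hjj : j + 1 = t0 := by omega
          have hz : morrisRun v (k + (j : Fin n)) = 0 := by
            apply morrisRun_zero
            have hstep : (k + (j : Fin n)) + 1 = k + ((j + 1 : ℕ) : Fin n) := by
              push_cast; ring
            rw [hstep, hjj, hkt0]
            exact hvi0
          rw [hz] at hoj
          simp at hoj
        have hmj : mterm k v j = j + 1 := by
          unfold mterm
          rw [hjz]
          simp [hoj]
        have hmj' : mterm k v' j ≥ 0 := Nat.zero_le _
        omega
      · have hmj : mterm k v j = 0 := by
          unfold mterm
          rw [hjz]
          simp [hoj]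
        omega
    · -- Z empty : everything below t0 is ones
      have hblockall : ∀ u, 1 ≤ u → u < t0 → v (k + (u : Fin n)) = true := by
        intro u hu1 hu2
        cases hvu : v (k + (u : Fin n)) with
        | true => rfl
        | false =>
          exact absurd ⟨u, Finset.mem_filter.mpr
            ⟨Finset.mem_Icc.mpr ⟨hu1, by omega⟩, hvu⟩⟩ hZne
      have hrest : ∀ t ∈ (Finset.Icc 1 (n-1)).erase t0, mterm k v' t = mterm k v t := by
        intro t htm
        obtain ⟨htne, htIcc⟩ := Finset.mem_erase.mp htm
        obtain ⟨ht1, ht2⟩ := Finset.mem_Icc.mp htIcc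
        have htn : t < n := by omega
        have hsame_t : v' (k + (t : Fin n)) = v (k + (t : Fin n)) := hsame t htn htne
        rcases lt_or_gt_of_ne htne with hlt | hgt
        · unfold mterm
          rw [hsame_t, hblockall t ht1 hlt]
          simp
        · have hruneq := habove t (by omega) (by omega)
          unfold mterm
          rw [hsame_t, hruneq]
      have hsum : ∑ x ∈ (Finset.Icc 1 (n-1)).erase t0, mterm k v' x
          = ∑ x ∈ (Finset.Icc 1 (n-1)).erase t0, mterm k v x := Finset.sum_congr rfl hrest
      omega

end StepLemma

section BoundLemma
variable {n : ℕ} [NeZero n]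

lemma sum_Icc_two_mul (e : ℕ → ℕ) (he : ∀ t, e t + e (t+1) ≤ 1) :
    ∀ M : ℕ, (∑ t ∈ Finset.Icc 1 (2*M), e t) ≤ M := by
  intro M
  induction M with
  | zero => simp
  | succ M ih =>
    have h2 : 2*(M+1) = (2*M + 1) + 1 := by ring
    rw [h2, Finset.sum_Icc_succ_top (by omega), Finset.sum_Icc_succ_top (by omega)]
    have := he (2*M+1)
    omega

lemma sum_Icc_gauss : ∀ M : ℕ, (∑ t ∈ Finset.Icc 1 (2*M), (t : ℕ)) = M * (2*M + 1) := by
  intro M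
  induction M with
  | zero => simp
  | succ M ih =>
    have h2 : 2*(M+1) = (2*M + 1) + 1 := by ring
    rw [h2, Finset.sum_Icc_succ_top (by omega), Finset.sum_Icc_succ_top (by omega), ih]
    ring

lemma mpsi_le (hn : Odd n) {v : Fin n → Bool} {k : Fin n} (hk : v k = false) :
    mpsi k v ≤ n * (n + 1) / 2 := by
  obtain ⟨w, hw⟩ := hn
  set e : ℕ → ℕ := fun t =>
    if v (k + (t : Fin n)) = false ∧ Odd (morrisRun v (k + (t : Fin n))) then 1 else 0 with hedef
  have hterm : ∀ t, mterm k v t ≤ t + e t := by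
    intro t
    by_cases h1 : v (k + (t : Fin n)) = true
    · unfold mterm; rw [if_pos h1]; omega
    · have h1' : v (k + (t : Fin n)) = false := by
        cases h : v (k + (t : Fin n)) with
        | true => exact absurd h h1
        | false => rfl
      by_cases h2 : Odd (morrisRun v (k + (t : Fin n)))
      · unfold mterm
        rw [if_neg h1, if_pos h2, hedef]
        simp only [if_pos (And.intro h1' h2)]
        omega
      · unfold mterm
        rw [if_neg h1, if_neg h2]
        omega
  have hle1 : ∀ s, e s ≤ 1 := by
    intro s
    show (if v (k + (s : Fin n)) = false ∧ Odd (morrisRun v (k + (s : Fin n)))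
      then 1 else 0) ≤ 1
    split <;> omega
  have hpair : ∀ t, e t + e (t+1) ≤ 1 := by
    intro t
    by_cases h1 : e t = 0
    · have := hle1 (t+1)
      omega
    · have h2 : v (k + (t : Fin n)) = false ∧ Odd (morrisRun v (k + (t : Fin n))) := by
        by_contra h
        apply h1
        show (if v (k + (t : Fin n)) = false ∧ Odd (morrisRun v (k + (t : Fin n)))
          then 1 else 0) = 0
        rw [if_neg h]
      have hpos : morrisRun v (k + (t : Fin n)) ≠ 0 := by
        intro h0
        rw [h0] at h2
        exact (by simp : ¬ Odd 0) h2.2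
      have hone : v (k + ((t+1 : ℕ) : Fin n)) = true := by
        have := (morrisRun_spec hk (k + (t : Fin n))).2.2 0 (by omega)
        rwa [shiftPos, show t + 1 + 0 = t + 1 by omega] at this
      have : e (t+1) = 0 := by
        rw [hedef]
        simp only [hone]
        simp
      have := hle1 t
      omega
  have hen1 : n - 1 = 2*w := by omega
  have hsum1 : (∑ t ∈ Finset.Icc 1 (n-1), mterm k v t)
      ≤ (∑ t ∈ Finset.Icc 1 (n-1), (t + e t)) := Finset.sum_le_sum (fun t _ => hterm t)
  rw [Finset.sum_add_distrib] at hsum1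
  have hsum2 : (∑ t ∈ Finset.Icc 1 (n-1), e t) ≤ w := by
    rw [hen1]; exact sum_Icc_two_mul e hpair w
  have hsum3 : (∑ t ∈ Finset.Icc 1 (n-1), (t:ℕ)) = w * (2*w+1) := by
    rw [hen1]; exact sum_Icc_gauss w
  have hgoal : n * (n + 1) / 2 = (2*w+1) * (w+1) := by
    have h1 : n * (n+1) = 2 * ((2*w+1)*(w+1)) := by rw [hw]; ring
    rw [h1]
    omega
  rw [mpsi, hgoal]
  have hfin : w * (2*w+1) + w ≤ (2*w+1) * (w+1) := by nlinarith
  omega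

end BoundLemma

/-- in the Morris orientation (`n` odd), any directed path starting
at a vertex `v` with `v k = 0` reaches a vertex whose `k`-th coordinate is `1`
after at most `n(n+1)/2` steps; equivalently, a directed path all of whose
vertices have `k`-th coordinate `0` has length at most `n(n+1)/2`. -/
theorem morris_leaves_lower_facet {n : ℕ} [NeZero n] (hn : Odd n)
    (k : Fin n) (L : ℕ) (p : ℕ → (Fin n → Bool))
    (hstep : ∀ m < L, Step (morris) (p m) (p (m + 1)))
    (hzero : ∀ m ≤ L, p m k = false) :
    L ≤ n * (n + 1) / 2 := by
  have key : ∀ m ≤ L, mpsi k (p 0) + m ≤ mpsi k (p m) := by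
    intro m
    induction m with
    | zero => intro _; omega
    | succ m ih =>
      intro hm
      obtain ⟨i, hout, heq⟩ := hstep m (by omega)
      have hik : i ≠ k := by
        intro h
        have : p (m+1) k = !p m k := by rw [heq, h, cflip]; simp
        rw [hzero m (by omega), hzero (m+1) hm] at this
        simp at this
      have hs := mpsi_step (hzero m (by omega)) hik hout
      rw [← heq] at hs
      have := ih (by omega)
      omega
  have h1 := key L le_rfl
  have h2 := mpsi_le hn (hzero L le_rfl)
  omega
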